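/- Let (β_t)_{t=0}^∞ be a real sequence with Σ_{t=0}^∞ β_t² < ∞ and let r ∈ (0, 1). Then the doubly-indexed family (β_t β_τ r^{|t−τ|})_{t,τ ∈ ℕ} is summable, and its sum Σ_{t=0}^∞ Σ_{τ=0}^∞ β_t β_τ r^{|t−τ|} is nonnegative. -/
import Mathlib
open Finset

lemma geomaux (r : ℝ) (hr0 : 0 < r) (hr1 : r < 1) (t τ M : ℕ) (hτ : τ < M) (hle : t ≤ τ) :
    r ^ ((t:ℤ) - τ).natAbs =
      (1 - r^2) * ∑ m ∈ range M,
        ((if t ≤ m then r^(m-t) else 0) * (if τ ≤ m then r^(m-τ) else 0))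
      + r^(M-t) * r^(M-τ) := by
  have hR1 : (r^2 : ℝ) ≠ 1 := by nlinarith
  have hsub : Finset.Ico τ M ⊆ range M := by
    intro m hm; simp only [Finset.mem_Ico] at hm; simp only [Finset.mem_range]; omega
  have hsum : ∑ m ∈ range M,
      ((if t ≤ m then r^(m-t) else 0) * (if τ ≤ m then r^(m-τ) else 0))
      = r^(τ-t) * ∑ k ∈ range (M - τ), (r^2)^k := by
    rw [← Finset.sum_subset hsub
      (f := fun m => (if t ≤ m then r^(m-t) else 0) * (if τ ≤ m then r^(m-τ) else 0))]
    · rw [Finset.sum_Ico_eq_sum_range, Finset.mul_sum]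
      apply Finset.sum_congr rfl
      intro k hk
      rw [if_pos (by omega), if_pos (by omega), ← pow_add, ← pow_mul, ← pow_add]
      congr 1
      omega
    · intro m hm hnotm
      simp only [Finset.mem_range, Finset.mem_Ico] at hm hnotm
      rw [if_neg (show ¬ τ ≤ m by omega), mul_zero]
  rw [hsum, geom_sum_eq hR1]
  have hnab : ((t:ℤ) - τ).natAbs = τ - t := by omega
  have hpow : r^(M-t) * r^(M-τ) = r^(τ-t) * (r^2)^(M-τ) := by
    rw [← pow_add, ← pow_mul, ← pow_add]
    congr 1
    omega
  rw [hnab, hpow]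
  have hr2 : (r^2 : ℝ) - 1 ≠ 0 := sub_ne_zero.mpr hR1
  generalize (r:ℝ)^(τ-t) = A
  generalize ((r:ℝ)^2)^(M-τ) = B
  field_simp
  ring

lemma geomkey (r : ℝ) (hr0 : 0 < r) (hr1 : r < 1) (t τ M : ℕ) (ht : t < M) (hτ : τ < M) :
    r ^ ((t:ℤ) - τ).natAbs =
      (1 - r^2) * ∑ m ∈ range M,
        ((if t ≤ m then r^(m-t) else 0) * (if τ ≤ m then r^(m-τ) else 0))
      + r^(M-t) * r^(M-τ) := by
  rcases le_total t τ with h | h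
  · exact geomaux r hr0 hr1 t τ M hτ h
  · have H := geomaux r hr0 hr1 τ t M ht h
    rw [show ((t:ℤ) - τ).natAbs = ((τ:ℤ) - t).natAbs by omega, H]
    have : ∑ m ∈ range M, ((if τ ≤ m then r^(m-τ) else 0) * (if t ≤ m then r^(m-t) else 0))
        = ∑ m ∈ range M, ((if t ≤ m then r^(m-t) else 0) * (if τ ≤ m then r^(m-τ) else 0)) := by
      apply Finset.sum_congr rfl; intro m _; ring
    rw [this]
    ring

lemma finite_psd (β : ℕ → ℝ) (r : ℝ) (hr0 : 0 < r) (hr1 : r < 1) (n : ℕ) :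
    0 ≤ ∑ t ∈ range n, ∑ τ ∈ range n, β t * β τ * r ^ ((t:ℤ) - (τ:ℤ)).natAbs := by
  set a : ℕ → ℕ → ℝ := fun m t => if t ≤ m then r^(m-t) else 0 with ha
  have key : ∑ t ∈ range n, ∑ τ ∈ range n, β t * β τ * r ^ ((t:ℤ) - (τ:ℤ)).natAbs
      = (1 - r^2) * ∑ m ∈ range n, (∑ t ∈ range n, β t * a m t)^2
        + (∑ t ∈ range n, β t * r^(n-t))^2 := by
    have step1 : ∑ t ∈ range n, ∑ τ ∈ range n, β t * β τ * r ^ ((t:ℤ) - (τ:ℤ)).natAbs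
        = ∑ t ∈ range n, ∑ τ ∈ range n,
            ((1 - r^2) * ∑ m ∈ range n, (β t * a m t) * (β τ * a m τ)
              + (β t * r^(n-t)) * (β τ * r^(n-τ))) := by
      apply Finset.sum_congr rfl
      intro t ht
      apply Finset.sum_congr rfl
      intro τ hτ
      simp only [Finset.mem_range] at ht hτ
      rw [geomkey r hr0 hr1 t τ n ht hτ]
      have : ∑ m ∈ range n, (β t * a m t) * (β τ * a m τ)
          = β t * β τ * ∑ m ∈ range n, a m t * a m τ := by
        rw [Finset.mul_sum]
        apply Finset.sum_congr rfl
        intro m _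
        ring
      rw [this]
      ring
    have swap : ∑ t ∈ range n, ∑ τ ∈ range n, ∑ m ∈ range n, (β t * a m t) * (β τ * a m τ)
        = ∑ m ∈ range n, ∑ t ∈ range n, ∑ τ ∈ range n, (β t * a m t) * (β τ * a m τ) := by
      calc ∑ t ∈ range n, ∑ τ ∈ range n, ∑ m ∈ range n, (β t * a m t) * (β τ * a m τ)
          = ∑ t ∈ range n, ∑ m ∈ range n, ∑ τ ∈ range n, (β t * a m t) * (β τ * a m τ) := by
            apply Finset.sum_congr rfl
            intro t _
            exact Finset.sum_comm
        _ = ∑ m ∈ range n, ∑ t ∈ range n, ∑ τ ∈ range n, (β t * a m t) * (β τ * a m τ) :=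
            Finset.sum_comm
    rw [step1]
    simp only [Finset.sum_add_distrib]
    congr 1
    · calc ∑ t ∈ range n, ∑ τ ∈ range n,
            (1 - r^2) * ∑ m ∈ range n, (β t * a m t) * (β τ * a m τ)
          = (1 - r^2) * ∑ t ∈ range n, ∑ τ ∈ range n,
              ∑ m ∈ range n, (β t * a m t) * (β τ * a m τ) := by
            rw [Finset.mul_sum]
            apply Finset.sum_congr rfl
            intro t _
            rw [Finset.mul_sum]
        _ = (1 - r^2) * ∑ m ∈ range n, (∑ t ∈ range n, β t * a m t)^2 := by
            rw [swap]
            congr 1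
            apply Finset.sum_congr rfl
            intro m _
            rw [sq, Finset.sum_mul_sum]
    · rw [sq, Finset.sum_mul_sum]
  rw [key]
  have h1 : (0:ℝ) ≤ 1 - r^2 := by nlinarith
  positivity

lemma row_sum (r : ℝ) (hr0 : 0 < r) (hr1 : r < 1) (t : ℕ) :
    Summable (fun τ : ℕ => r ^ ((t:ℤ) - τ).natAbs) := by
  refine Summable.of_nonneg_of_le (fun τ => by positivity) (fun τ => ?_)
    ((summable_geometric_of_lt_one hr0.le hr1).mul_left ((r^t)⁻¹))
  have h1 : r ^ ((t:ℤ) - τ).natAbs ≤ r ^ (τ - t) :=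
    pow_le_pow_of_le_one hr0.le hr1.le (by omega)
  have h2 : r ^ (τ - t) * r ^ t ≤ r ^ τ := by
    rw [← pow_add]
    exact pow_le_pow_of_le_one hr0.le hr1.le (by omega)
  have hrt : (0:ℝ) < r ^ t := by positivity
  calc r ^ ((t:ℤ) - τ).natAbs ≤ r ^ (τ - t) := h1
    _ ≤ (r^t)⁻¹ * r^τ := by
        rw [le_inv_mul_iff₀ hrt, mul_comm]
        exact h2

lemma tsum_row_le (r : ℝ) (hr0 : 0 < r) (hr1 : r < 1) (t : ℕ) :
    ∑' τ : ℕ, r ^ ((t:ℤ) - τ).natAbs ≤ 2 / (1 - r) := by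
  rw [← Summable.sum_add_tsum_nat_add t (row_sum r hr0 hr1 t)]
  have h1 : ∑' i : ℕ, r ^ ((t:ℤ) - ((i + t : ℕ) : ℤ)).natAbs = (1 - r)⁻¹ := by
    rw [← tsum_geometric_of_lt_one hr0.le hr1]
    apply tsum_congr
    intro i
    congr 1
    omega
  have h2 : ∑ i ∈ Finset.range t, r ^ ((t:ℤ) - i).natAbs ≤ (1 - r)⁻¹ := by
    have e : ∑ i ∈ Finset.range t, r ^ ((t:ℤ) - i).natAbs
        = ∑ j ∈ Finset.range t, r ^ ((t:ℤ) - (t - 1 - j : ℕ)).natAbs :=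
      (Finset.sum_range_reflect (fun i => r ^ ((t:ℤ) - i).natAbs) t).symm
    rw [e]
    have hle : ∑ j ∈ Finset.range t, r ^ ((t:ℤ) - (t - 1 - j : ℕ)).natAbs
        ≤ ∑ j ∈ Finset.range t, r ^ j := by
      apply Finset.sum_le_sum
      intro j hj
      simp only [Finset.mem_range] at hj
      exact pow_le_pow_of_le_one hr0.le hr1.le (by omega)
    refine hle.trans ?_
    apply Summable.sum_le_tsum _ (fun i _ => by positivity)
      (summable_geometric_of_lt_one hr0.le hr1) |>.trans
    rw [tsum_geometric_of_lt_one hr0.le hr1]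
  rw [h1]
  have : 2 / (1 - r) = (1 - r)⁻¹ + (1 - r)⁻¹ := by
    rw [div_eq_mul_inv]; ring
  rw [this]
  exact add_le_add h2 le_rfl

lemma summable_maj1 (β : ℕ → ℝ) (hβ : Summable fun t => β t ^ 2)
    (r : ℝ) (hr0 : 0 < r) (hr1 : r < 1) :
    Summable (fun p : ℕ × ℕ => β p.1 ^ 2 * r ^ ((p.1 : ℤ) - (p.2 : ℤ)).natAbs) := by
  have hnn : ∀ p : ℕ × ℕ, 0 ≤ β p.1 ^ 2 * r ^ ((p.1 : ℤ) - (p.2 : ℤ)).natAbs :=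
    fun p => by positivity
  have hrow : ∀ t : ℕ, Summable (fun τ : ℕ => β t ^ 2 * r ^ ((t:ℤ) - τ).natAbs) :=
    fun t => (row_sum r hr0 hr1 t).mul_left _
  have hcol : Summable (fun t : ℕ => ∑' τ : ℕ, β t ^ 2 * r ^ ((t:ℤ) - τ).natAbs) := by
    refine Summable.of_nonneg_of_le (fun t => tsum_nonneg fun τ => by positivity)
      (fun t => ?_) (hβ.mul_right (2 / (1 - r)))
    rw [tsum_mul_left]
    exact mul_le_mul_of_nonneg_left (tsum_row_le r hr0 hr1 t) (by positivity)
  exact (summable_prod_of_nonneg hnn).mpr ⟨hrow, hcol⟩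

lemma summable_maj2 (β : ℕ → ℝ) (hβ : Summable fun t => β t ^ 2)
    (r : ℝ) (hr0 : 0 < r) (hr1 : r < 1) :
    Summable (fun p : ℕ × ℕ => β p.2 ^ 2 * r ^ ((p.1 : ℤ) - (p.2 : ℤ)).natAbs) := by
  have h := ((Equiv.prodComm ℕ ℕ).summable_iff
    (f := fun p : ℕ × ℕ => β p.1 ^ 2 * r ^ ((p.1 : ℤ) - (p.2 : ℤ)).natAbs)).mpr
    (summable_maj1 β hβ r hr0 hr1)
  apply h.congr
  intro p
  simp only [Function.comp_apply, Equiv.prodComm_apply, Prod.fst_swap, Prod.snd_swap]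
  congr 2
  omega

theorem summable_and_nonneg_double_series (β : ℕ → ℝ) (hβ : Summable fun t => β t ^ 2)
    (r : ℝ) (hr0 : 0 < r) (hr1 : r < 1) :
    Summable (fun p : ℕ × ℕ => β p.1 * β p.2 * r ^ ((p.1 : ℤ) - (p.2 : ℤ)).natAbs) ∧
    0 ≤ ∑' t : ℕ, ∑' τ : ℕ, β t * β τ * r ^ ((t : ℤ) - (τ : ℤ)).natAbs := by
  have habs : Summable
      (fun p : ℕ × ℕ => |β p.1 * β p.2 * r ^ ((p.1 : ℤ) - (p.2 : ℤ)).natAbs|) := by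
    refine Summable.of_nonneg_of_le (fun p => abs_nonneg _) (fun p => ?_)
      ((summable_maj1 β hβ r hr0 hr1).add (summable_maj2 β hβ r hr0 hr1))
    have h0 : (0:ℝ) ≤ r ^ ((p.1:ℤ) - (p.2:ℤ)).natAbs := by positivity
    have h1 : |β p.1 * β p.2| ≤ β p.1 ^ 2 + β p.2 ^ 2 := by
      rw [abs_mul]
      nlinarith [sq_nonneg (|β p.1| - |β p.2|), sq_abs (β p.1), sq_abs (β p.2),
        abs_nonneg (β p.1), abs_nonneg (β p.2)]
    calc |β p.1 * β p.2 * r ^ ((p.1:ℤ) - (p.2:ℤ)).natAbs|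
        = |β p.1 * β p.2| * r ^ ((p.1:ℤ) - (p.2:ℤ)).natAbs := by
          rw [abs_mul, abs_of_nonneg h0]
      _ ≤ (β p.1 ^ 2 + β p.2 ^ 2) * r ^ ((p.1:ℤ) - (p.2:ℤ)).natAbs :=
          mul_le_mul_of_nonneg_right h1 h0
      _ = β p.1 ^ 2 * r ^ ((p.1:ℤ) - (p.2:ℤ)).natAbs
          + β p.2 ^ 2 * r ^ ((p.1:ℤ) - (p.2:ℤ)).natAbs := by ring
  have hsum : Summable
      (fun p : ℕ × ℕ => β p.1 * β p.2 * r ^ ((p.1 : ℤ) - (p.2 : ℤ)).natAbs) :=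
    habs.of_abs
  refine ⟨hsum, ?_⟩
  have hrows : ∀ t : ℕ, Summable
      (fun τ : ℕ => β t * β τ * r ^ ((t : ℤ) - (τ : ℤ)).natAbs) :=
    fun t => hsum.prod_factor t
  rw [← Summable.tsum_prod' hsum hrows]
  have hmono : Monotone (fun n : ℕ => Finset.range n ×ˢ Finset.range n) := by
    intro m n h
    exact Finset.product_subset_product (Finset.range_subset_range.mpr h)
      (Finset.range_subset_range.mpr h)
  have hmem : ∀ p : ℕ × ℕ, ∃ n, p ∈ Finset.range n ×ˢ Finset.range n := by
    intro p
    refine ⟨max p.1 p.2 + 1, ?_⟩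
    simp only [Finset.mem_product, Finset.mem_range]
    omega
  have htl : Filter.Tendsto (fun n : ℕ => Finset.range n ×ˢ Finset.range n)
      Filter.atTop Filter.atTop :=
    Filter.tendsto_atTop_finset_of_monotone hmono hmem
  have hten : Filter.Tendsto
      (fun n : ℕ => ∑ p ∈ Finset.range n ×ˢ Finset.range n,
        β p.1 * β p.2 * r ^ ((p.1 : ℤ) - (p.2 : ℤ)).natAbs)
      Filter.atTop (nhds (∑' p : ℕ × ℕ, β p.1 * β p.2 * r ^ ((p.1 : ℤ) - (p.2 : ℤ)).natAbs)) :=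
    hsum.hasSum.comp htl
  refine ge_of_tendsto' hten (fun n => ?_)
  rw [Finset.sum_product]
  exact finite_psd β r hr0 hr1 n
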